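/- Let G be the edge-gluing of vertex-disjoint graphs G_1 and G_2 along edges u_1v_1 ∈ E(G_1) and u_2v_2 ∈ E(G_2) (identifying u_1,u_2 as u and v_1,v_2 as v). Let H_1, H_2 be m-fold covers of G_1, G_2 respectively with canonical edges (u_i,j)(v_i,j) for all j ∈ [m], let f be a permutation of [m], and let H be the f-amalgamated m-fold cover of G obtained from H_1 and H_2. Then the number of H-colorings of G equals Σ_{j_2=1}^m Σ_{j_1=1}^m N({(u_1,j_1),(v_1,j_2)}, H_1) · N({(u_2,f(j_1)),(v_2,f(j_2))}, H_2). -/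

import Mathlib

open SimpleGraph

/-- An `m`-fold cover of a graph `G`, with lists canonically labeled by `Fin m`. -/
structure DPCover {V : Type} (G : SimpleGraph V) (m : ℕ) where
  H : SimpleGraph (V × Fin m)
  part_complete : ∀ (v : V) (a b : Fin m), a ≠ b → H.Adj (v, a) (v, b)
  cross : ∀ (u v : V) (a b : Fin m), u ≠ v → H.Adj (u, a) (v, b) → G.Adj u v
  matching_right : ∀ (u v : V) (a b b' : Fin m), u ≠ v →
    H.Adj (u, a) (v, b) → H.Adj (u, a) (v, b') → b = b'
  matching_left : ∀ (u v : V) (a a' b : Fin m), u ≠ v →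
    H.Adj (u, a) (v, b) → H.Adj (u, a') (v, b) → a = a'

/-- A cover is full if every matching between lists of adjacent vertices is perfect. -/
def DPCover.IsFull {V : Type} {G : SimpleGraph V} {m : ℕ} (C : DPCover G m) : Prop :=
  ∀ u v : V, G.Adj u v → ∀ a : Fin m, ∃ b : Fin m, C.H.Adj (u, a) (v, b)

/-- An `H`-coloring: a choice of one list element per vertex forming an independent set. -/
def DPCover.IsColoring {V : Type} {G : SimpleGraph V} {m : ℕ} (C : DPCover G m)
    (c : V → Fin m) : Prop :=
  ∀ u v : V, ¬ C.H.Adj (u, c u) (v, c v)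

/-- The number of `H`-colorings of `G` with respect to the cover `C`. -/
noncomputable def dpCount {V : Type} {G : SimpleGraph V} {m : ℕ} (C : DPCover G m) : ℕ :=
  Nat.card {c : V → Fin m // C.IsColoring c}

/-- `N(P, C)`: the number of `H`-colorings containing the set `P` of cover vertices. -/
noncomputable def NCount {V : Type} {G : SimpleGraph V} {m : ℕ} (C : DPCover G m)
    (P : Set (V × Fin m)) : ℕ :=
  Nat.card {c : V → Fin m // C.IsColoring c ∧ ∀ p ∈ P, c p.1 = p.2}

/-- The DP color function: minimum number of colorings over all `m`-fold covers. -/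
noncomputable def PDP {V : Type} (G : SimpleGraph V) (m : ℕ) : ℕ :=
  sInf {n : ℕ | ∃ C : DPCover G m, dpCount C = n}

/-- The number of proper `m`-colorings (the chromatic polynomial evaluated at `m`). -/
noncomputable def properCount {V : Type} (G : SimpleGraph V) (m : ℕ) : ℕ :=
  Nat.card {c : V → Fin m // ∀ u v : V, G.Adj u v → c u ≠ c v}

/-- A cover has a canonical labeling if lists can be renamed so all cross edges are
`(u,j)(v,j)`. -/
def DPCover.HasCanonicalLabeling {V : Type} {G : SimpleGraph V} {m : ℕ}
    (C : DPCover G m) : Prop :=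
  ∃ σ : V → Equiv.Perm (Fin m), ∀ u v : V, G.Adj u v → ∀ j : Fin m,
    C.H.Adj (u, σ u j) (v, σ v j)

/-- `G` (on vertex set `W`) is the edge-gluing of the vertex-disjoint graphs
`G1`, `G2` along the edges `u1v1` and `u2v2`, identified via `φ1`, `φ2`. -/
structure IsEdgeGluing2 {V1 V2 W : Type} (G1 : SimpleGraph V1) (G2 : SimpleGraph V2)
    (u1 v1 : V1) (u2 v2 : V2) (G : SimpleGraph W) (φ1 : V1 → W) (φ2 : V2 → W) : Prop where
  inj1 : Function.Injective φ1
  inj2 : Function.Injective φ2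
  glue_u : φ1 u1 = φ2 u2
  glue_v : φ1 v1 = φ2 v2
  covers : ∀ w : W, (∃ x, φ1 x = w) ∨ (∃ y, φ2 y = w)
  inter : ∀ x y, φ1 x = φ2 y → (x = u1 ∧ y = u2) ∨ (x = v1 ∧ y = v2)
  embed1 : ∀ x y, G.Adj (φ1 x) (φ1 y) ↔ G1.Adj x y
  embed2 : ∀ x y, G.Adj (φ2 x) (φ2 y) ↔ G2.Adj x y
  no_extra : ∀ x y, G.Adj (φ1 x) (φ2 y) → (x = u1 ∨ x = v1) ∧ (y = u2 ∨ y = v2)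

section AmalgamationHelpers

variable {V1 V2 W : Type} {m : ℕ}

/-- Glue two colorings along the identification maps. -/
noncomputable def ampPhi (φ1 : V1 → W) (φ2 : V2 → W)
    (hcov : ∀ w : W, (∃ x, φ1 x = w) ∨ (∃ y, φ2 y = w))
    (c1 : V1 → Fin m) (c2 : V2 → Fin m) (w : W) : Fin m :=
  haveI := Classical.dec (∃ x, φ1 x = w)
  if h : ∃ x, φ1 x = w then c1 h.choose else c2 ((hcov w).resolve_left h).choose

lemma ampPhi_apply1 {φ1 : V1 → W} (φ2 : V2 → W)
    (hcov : ∀ w : W, (∃ x, φ1 x = w) ∨ (∃ y, φ2 y = w))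
    (inj1 : Function.Injective φ1) (c1 : V1 → Fin m) (c2 : V2 → Fin m) (x : V1) :
    ampPhi φ1 φ2 hcov c1 c2 (φ1 x) = c1 x := by
  have h : ∃ x', φ1 x' = φ1 x := ⟨x, rfl⟩
  rw [ampPhi, dif_pos h]
  exact congrArg c1 (inj1 h.choose_spec)

lemma ampPhi_apply2 (φ1 : V1 → W) {φ2 : V2 → W}
    (hcov : ∀ w : W, (∃ x, φ1 x = w) ∨ (∃ y, φ2 y = w))
    (inj2 : Function.Injective φ2) {y : V2} (hnot : ∀ x, φ1 x ≠ φ2 y)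
    (c1 : V1 → Fin m) (c2 : V2 → Fin m) :
    ampPhi φ1 φ2 hcov c1 c2 (φ2 y) = c2 y := by
  have h : ¬ ∃ x, φ1 x = φ2 y := fun ⟨x, hx⟩ => hnot x hx
  rw [ampPhi, dif_neg h]
  exact congrArg c2 (inj2 ((hcov (φ2 y)).resolve_left h).choose_spec)

/-- Relabeling of the lists of `G2` induced by the permutation `f` at the glued vertices. -/
noncomputable def ampRelabel (u2 v2 : V2) (f : Equiv.Perm (Fin m)) (y : V2) (a : Fin m) :
    Fin m :=
  haveI := Classical.dec (y = u2 ∨ y = v2)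
  if y = u2 ∨ y = v2 then f a else a

lemma ampRelabel_pos (u2 v2 : V2) (f : Equiv.Perm (Fin m)) {y : V2} (a : Fin m)
    (h : y = u2 ∨ y = v2) : ampRelabel u2 v2 f y a = f a := by
  rw [ampRelabel]
  exact if_pos h

lemma ampRelabel_neg (u2 v2 : V2) (f : Equiv.Perm (Fin m)) {y : V2} (a : Fin m)
    (h1 : y ≠ u2) (h2 : y ≠ v2) : ampRelabel u2 v2 f y a = a := by
  rw [ampRelabel]
  exact if_neg (by rintro (h | h) <;> [exact h1 h; exact h2 h])

lemma ampRelabel_inj (u2 v2 : V2) (f : Equiv.Perm (Fin m)) (y : V2) {a b : Fin m}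
    (h : ampRelabel u2 v2 f y a = ampRelabel u2 v2 f y b) : a = b := by
  by_cases hy : y = u2 ∨ y = v2
  · rw [ampRelabel_pos u2 v2 f a hy, ampRelabel_pos u2 v2 f b hy] at h
    exact f.injective h
  · push_neg at hy
    rwa [ampRelabel_neg u2 v2 f a hy.1 hy.2, ampRelabel_neg u2 v2 f b hy.1 hy.2] at h

/-- The coloring of `G2` read off from a coloring of the glued graph. -/
noncomputable def ampG (φ2 : V2 → W) (u2 v2 : V2) (f : Equiv.Perm (Fin m))
    (c : W → Fin m) (y : V2) : Fin m :=
  ampRelabel u2 v2 f y (c (φ2 y))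

lemma nat_card_sigma {ι : Type} [Fintype ι] (g : ι → Type) [∀ i, Finite (g i)] :
    Nat.card ((i : ι) × g i) = ∑ i, Nat.card (g i) := by
  haveI := fun i => Fintype.ofFinite (g i)
  rw [Nat.card_eq_fintype_card, Fintype.card_sigma]
  exact Finset.sum_congr rfl fun i _ => (Nat.card_eq_fintype_card).symm

end AmalgamationHelpers

theorem dpCount_amalgamated_edge {V1 V2 W : Type} [Fintype V1] [Fintype V2] [Fintype W]
    {G1 : SimpleGraph V1} {G2 : SimpleGraph V2} {G : SimpleGraph W}
    {u1 v1 : V1} {u2 v2 : V2} {φ1 : V1 → W} {φ2 : V2 → W}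
    (hglue : IsEdgeGluing2 G1 G2 u1 v1 u2 v2 G φ1 φ2)
    (he1 : G1.Adj u1 v1) (he2 : G2.Adj u2 v2)
    {m : ℕ} (C1 : DPCover G1 m) (C2 : DPCover G2 m)
    (hcan1 : ∀ j : Fin m, C1.H.Adj (u1, j) (v1, j))
    (hcan2 : ∀ j : Fin m, C2.H.Adj (u2, j) (v2, j))
    (f : Equiv.Perm (Fin m))
    (C : DPCover G m)
    -- `C` is the `f`-amalgamated cover of `G` obtained from `C1` and `C2`:
    (hinner1 : ∀ x y : V1, x ≠ u1 → x ≠ v1 → y ≠ u1 → y ≠ v1 → ∀ r s : Fin m,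
      (C.H.Adj (φ1 x, r) (φ1 y, s) ↔ C1.H.Adj (x, r) (y, s)))
    (hinner2 : ∀ x y : V2, x ≠ u2 → x ≠ v2 → y ≠ u2 → y ≠ v2 → ∀ r s : Fin m,
      (C.H.Adj (φ2 x, r) (φ2 y, s) ↔ C2.H.Adj (x, r) (y, s)))
    (hglued1 : ∀ x : V1, x ≠ u1 → x ≠ v1 → ∀ r j : Fin m,
      (C.H.Adj (φ1 x, r) (φ1 u1, j) ↔ C1.H.Adj (x, r) (u1, j)) ∧
      (C.H.Adj (φ1 x, r) (φ1 v1, j) ↔ C1.H.Adj (x, r) (v1, j)))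
    (hglued2 : ∀ x : V2, x ≠ u2 → x ≠ v2 → ∀ r j : Fin m,
      (C.H.Adj (φ2 x, r) (φ1 u1, j) ↔ C2.H.Adj (x, r) (u2, f j)) ∧
      (C.H.Adj (φ2 x, r) (φ1 v1, j) ↔ C2.H.Adj (x, r) (v2, f j)))
    (hgluededge : ∀ j j' : Fin m, C.H.Adj (φ1 u1, j) (φ1 v1, j') ↔ j = j') :
    dpCount C = ∑ j2 : Fin m, ∑ j1 : Fin m,
      NCount C1 ({(u1, j1), (v1, j2)} : Set (V1 × Fin m)) *
      NCount C2 ({(u2, f j1), (v2, f j2)} : Set (V2 × Fin m)) := by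
  classical
  have hne1 : u1 ≠ v1 := he1.ne
  have hne2 : u2 ≠ v2 := he2.ne
  have lemA : ∀ a b : Fin m, C1.H.Adj (u1, a) (v1, b) ↔ a = b := fun a b =>
    ⟨fun h => (C1.matching_right u1 v1 a b a hne1 h (hcan1 a)).symm,
     fun h => by subst h; exact hcan1 a⟩
  have lemB : ∀ a b : Fin m, C2.H.Adj (u2, a) (v2, b) ↔ a = b := fun a b =>
    ⟨fun h => (C2.matching_right u2 v2 a b a hne2 h (hcan2 a)).symm,
     fun h => by subst h; exact hcan2 a⟩
  -- transfer of adjacency along φ1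
  have trans1 : ∀ (x y : V1) (a b : Fin m),
      C.H.Adj (φ1 x, a) (φ1 y, b) ↔ C1.H.Adj (x, a) (y, b) := by
    intro x y a b
    by_cases hxy : x = y
    · subst hxy
      by_cases hab : a = b
      · subst hab
        exact iff_of_false (fun h => C.H.loopless.irrefl _ h) (fun h => C1.H.loopless.irrefl _ h)
      · exact iff_of_true (C.part_complete _ _ _ hab) (C1.part_complete _ _ _ hab)
    · by_cases hxu : x = u1
      · rw [hxu]
        by_cases hyv : y = v1
        · rw [hyv]; exact (hgluededge a b).trans (lemA a b).symm
        · have hyu : y ≠ u1 := fun h => hxy (hxu.trans h.symm)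
          have h := (hglued1 y hyu hyv b a).1
          constructor
          · intro hh; exact (h.mp hh.symm).symm
          · intro hh; exact (h.mpr hh.symm).symm
      · by_cases hxv : x = v1
        · rw [hxv]
          by_cases hyu : y = u1
          · rw [hyu]
            constructor
            · intro hh; exact ((lemA b a).mpr ((hgluededge b a).mp hh.symm)).symm
            · intro hh; exact ((hgluededge b a).mpr ((lemA b a).mp hh.symm)).symm
          · have hyv : y ≠ v1 := fun h => hxy (hxv.trans h.symm)
            have h := (hglued1 y hyu hyv b a).2
            constructor
            · intro hh; exact (h.mp hh.symm).symm
            · intro hh; exact (h.mpr hh.symm).symm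
        · by_cases hyu : y = u1
          · rw [hyu]; exact (hglued1 x hxu hxv a b).1
          · by_cases hyv : y = v1
            · rw [hyv]; exact (hglued1 x hxu hxv a b).2
            · exact hinner1 x y hxu hxv hyu hyv a b
  -- transfer of adjacency along φ2, with relabeling at the glued vertices
  have trans2 : ∀ (x y : V2) (a b : Fin m),
      C.H.Adj (φ2 x, a) (φ2 y, b) ↔
        C2.H.Adj (x, ampRelabel u2 v2 f x a) (y, ampRelabel u2 v2 f y b) := by
    intro x y a b
    by_cases hxy : x = y
    · subst hxy
      by_cases hab : a = b
      · subst hab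
        exact iff_of_false (fun h => C.H.loopless.irrefl _ h) (fun h => C2.H.loopless.irrefl _ h)
      · exact iff_of_true (C.part_complete _ _ _ hab)
          (C2.part_complete _ _ _ (fun h => hab (ampRelabel_inj u2 v2 f x h)))
    · by_cases hxu : x = u2
      · rw [hxu]
        rw [ampRelabel_pos u2 v2 f a (Or.inl rfl), ← hglue.glue_u]
        by_cases hyv : y = v2
        · rw [hyv]
          rw [ampRelabel_pos u2 v2 f b (Or.inr rfl), ← hglue.glue_v]
          rw [hgluededge a b, lemB (f a) (f b)]
          exact f.injective.eq_iff.symm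
        · have hyu : y ≠ u2 := fun h => hxy (hxu.trans h.symm)
          rw [ampRelabel_neg u2 v2 f b hyu hyv]
          have h := (hglued2 y hyu hyv b a).1
          constructor
          · intro hh; exact (h.mp hh.symm).symm
          · intro hh; exact (h.mpr hh.symm).symm
      · by_cases hxv : x = v2
        · rw [hxv]
          rw [ampRelabel_pos u2 v2 f a (Or.inr rfl), ← hglue.glue_v]
          by_cases hyu : y = u2
          · rw [hyu]
            rw [ampRelabel_pos u2 v2 f b (Or.inl rfl), ← hglue.glue_u]
            constructor
            · intro hh
              exact ((lemB (f b) (f a)).mpr (congrArg f ((hgluededge b a).mp hh.symm))).symm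
            · intro hh
              exact ((hgluededge b a).mpr (f.injective ((lemB (f b) (f a)).mp hh.symm))).symm
          · have hyv : y ≠ v2 := fun h => hxy (hxv.trans h.symm)
            rw [ampRelabel_neg u2 v2 f b hyu hyv]
            have h := (hglued2 y hyu hyv b a).2
            constructor
            · intro hh; exact (h.mp hh.symm).symm
            · intro hh; exact (h.mpr hh.symm).symm
        · rw [ampRelabel_neg u2 v2 f a hxu hxv]
          by_cases hyu : y = u2
          · rw [hyu]
            rw [ampRelabel_pos u2 v2 f b (Or.inl rfl), ← hglue.glue_u]
            exact (hglued2 x hxu hxv a b).1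
          · by_cases hyv : y = v2
            · rw [hyv]
              rw [ampRelabel_pos u2 v2 f b (Or.inr rfl), ← hglue.glue_v]
              exact (hglued2 x hxu hxv a b).2
            · rw [ampRelabel_neg u2 v2 f b hyu hyv]
              exact hinner2 x y hxu hxv hyu hyv a b
  -- no cross edges except at the glued vertices
  have mixNone : ∀ (x : V1) (y : V2), x ≠ u1 → x ≠ v1 → ∀ a b : Fin m,
      ¬ C.H.Adj (φ1 x, a) (φ2 y, b) := by
    intro x y hxu hxv a b h
    have hne : φ1 x ≠ φ2 y := by
      intro e
      rcases hglue.inter x y e with ⟨h1, _⟩ | ⟨h1, _⟩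
      · exact hxu h1
      · exact hxv h1
    rcases (hglue.no_extra x y (C.cross _ _ _ _ hne h)).1 with h1 | h1
    · exact hxu h1
    · exact hxv h1
  -- canonical decomposition of the glued vertex set
  have decomp : ∀ w : W, (∃ x, φ1 x = w) ∨ (∃ y, φ2 y = w ∧ y ≠ u2 ∧ y ≠ v2) := by
    intro w
    rcases hglue.covers w with h | ⟨y, hy⟩
    · exact Or.inl h
    · by_cases h2 : y = u2
      · exact Or.inl ⟨u1, by rw [hglue.glue_u, ← h2, hy]⟩
      · by_cases h3 : y = v2
        · exact Or.inl ⟨v1, by rw [hglue.glue_v, ← h3, hy]⟩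
        · exact Or.inr ⟨y, hy, h2, h3⟩
  -- forward maps are colorings
  have fwd1 : ∀ c : W → Fin m, C.IsColoring c → C1.IsColoring (fun x => c (φ1 x)) := by
    intro c hc x y
    show ¬ C1.H.Adj (x, c (φ1 x)) (y, c (φ1 y))
    rw [← trans1]
    exact hc _ _
  have fwd2 : ∀ c : W → Fin m, C.IsColoring c → C2.IsColoring (ampG φ2 u2 v2 f c) := by
    intro c hc x y
    show ¬ C2.H.Adj (x, ampRelabel u2 v2 f x (c (φ2 x))) (y, ampRelabel u2 v2 f y (c (φ2 y)))
    rw [← trans2]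
    exact hc _ _
  -- reverse direction
  have bwd : ∀ c : W → Fin m, C1.IsColoring (fun x => c (φ1 x)) →
      C2.IsColoring (ampG φ2 u2 v2 f c) → C.IsColoring c := by
    intro c h1 h2
    have mix : ∀ (x : V1) (y : V2), ¬ C.H.Adj (φ1 x, c (φ1 x)) (φ2 y, c (φ2 y)) := by
      intro x y
      by_cases hxu : x = u1
      · rw [hxu, hglue.glue_u, trans2]
        exact h2 _ _
      · by_cases hxv : x = v1
        · rw [hxv, hglue.glue_v, trans2]
          exact h2 _ _
        · exact mixNone x y hxu hxv _ _
    intro w w'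
    rcases decomp w with ⟨x, rfl⟩ | ⟨y, rfl, hy1, hy2⟩ <;>
      rcases decomp w' with ⟨x', rfl⟩ | ⟨y', rfl, hy1', hy2'⟩
    · rw [trans1]; exact h1 _ _
    · exact mix x y'
    · exact fun h => mix x' y h.symm
    · rw [trans2]; exact h2 _ _
  -- computation rules for the gluing map
  have hΦ1 : ∀ (c1 : V1 → Fin m) (c2 : V2 → Fin m) (x : V1),
      ampPhi φ1 φ2 hglue.covers c1 c2 (φ1 x) = c1 x := fun c1 c2 x =>
    ampPhi_apply1 φ2 hglue.covers hglue.inj1 c1 c2 x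
  have hΦ2 : ∀ (c1 : V1 → Fin m) (c2 : V2 → Fin m) (y : V2), y ≠ u2 → y ≠ v2 →
      ampPhi φ1 φ2 hglue.covers c1 c2 (φ2 y) = c2 y := by
    intro c1 c2 y hy1 hy2
    refine ampPhi_apply2 φ1 hglue.covers hglue.inj2 (fun x hx => ?_) c1 c2
    rcases hglue.inter x y hx with ⟨_, h⟩ | ⟨_, h⟩
    · exact hy1 h
    · exact hy2 h
  have hGu : ∀ c : W → Fin m, ampG φ2 u2 v2 f c u2 = f (c (φ1 u1)) := by
    intro c
    show ampRelabel u2 v2 f u2 (c (φ2 u2)) = f (c (φ1 u1))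
    rw [ampRelabel_pos u2 v2 f _ (Or.inl rfl), ← hglue.glue_u]
  have hGv : ∀ c : W → Fin m, ampG φ2 u2 v2 f c v2 = f (c (φ1 v1)) := by
    intro c
    show ampRelabel u2 v2 f v2 (c (φ2 v2)) = f (c (φ1 v1))
    rw [ampRelabel_pos u2 v2 f _ (Or.inr rfl), ← hglue.glue_v]
  have hFΦ : ∀ (c1 : V1 → Fin m) (c2 : V2 → Fin m),
      (fun x => ampPhi φ1 φ2 hglue.covers c1 c2 (φ1 x)) = c1 := fun c1 c2 =>
    funext fun x => hΦ1 c1 c2 x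
  have hGΦ : ∀ (c1 : V1 → Fin m) (c2 : V2 → Fin m), c2 u2 = f (c1 u1) → c2 v2 = f (c1 v1) →
      ampG φ2 u2 v2 f (ampPhi φ1 φ2 hglue.covers c1 c2) = c2 := by
    intro c1 c2 hu hv
    funext y
    by_cases hy1 : y = u2
    · rw [hy1, hGu, hΦ1]
      exact hu.symm
    · by_cases hy2 : y = v2
      · rw [hy2, hGv, hΦ1]
        exact hv.symm
      · show ampRelabel u2 v2 f y _ = c2 y
        rw [ampRelabel_neg u2 v2 f _ hy1 hy2, hΦ2 c1 c2 y hy1 hy2]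
  have hcol : ∀ (c1 : V1 → Fin m) (c2 : V2 → Fin m), C1.IsColoring c1 → C2.IsColoring c2 →
      c2 u2 = f (c1 u1) → c2 v2 = f (c1 v1) →
      C.IsColoring (ampPhi φ1 φ2 hglue.covers c1 c2) := by
    intro c1 c2 h1 h2 hu hv
    refine bwd _ ?_ ?_
    · rw [hFΦ c1 c2]; exact h1
    · rw [hGΦ c1 c2 hu hv]; exact h2
  -- the key bijection
  have e : {c : W → Fin m // C.IsColoring c} ≃
      (j2 : Fin m) × (j1 : Fin m) ×
        ({c1 : V1 → Fin m // C1.IsColoring c1 ∧ c1 u1 = j1 ∧ c1 v1 = j2} ×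
         {c2 : V2 → Fin m // C2.IsColoring c2 ∧ c2 u2 = f j1 ∧ c2 v2 = f j2}) :=
    { toFun := fun c => ⟨c.1 (φ1 v1), c.1 (φ1 u1),
        ⟨fun x => c.1 (φ1 x), fwd1 _ c.2, rfl, rfl⟩,
        ⟨ampG φ2 u2 v2 f c.1, fwd2 _ c.2, hGu c.1, hGv c.1⟩⟩
      invFun := fun t => ⟨ampPhi φ1 φ2 hglue.covers t.2.2.1.1 t.2.2.2.1,
        hcol t.2.2.1.1 t.2.2.2.1 t.2.2.1.2.1 t.2.2.2.2.1
          (t.2.2.2.2.2.1.trans (congrArg f t.2.2.1.2.2.1.symm))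
          (t.2.2.2.2.2.2.trans (congrArg f t.2.2.1.2.2.2.symm))⟩
      left_inv := by
        rintro ⟨c, hc⟩
        apply Subtype.ext
        funext w
        show ampPhi φ1 φ2 hglue.covers (fun x => c (φ1 x)) (ampG φ2 u2 v2 f c) w = c w
        rcases decomp w with ⟨x, rfl⟩ | ⟨y, rfl, hy1, hy2⟩
        · rw [hΦ1]
        · rw [hΦ2 _ _ _ hy1 hy2]
          show ampRelabel u2 v2 f y (c (φ2 y)) = c (φ2 y)
          rw [ampRelabel_neg u2 v2 f _ hy1 hy2]
      right_inv := by
        rintro ⟨j2, j1, ⟨c1, hc1, hu1', hv1'⟩, ⟨c2, hc2, hu2', hv2'⟩⟩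
        have h2 : ampPhi φ1 φ2 hglue.covers c1 c2 (φ1 v1) = j2 := (hΦ1 _ _ _).trans hv1'
        have h1 : ampPhi φ1 φ2 hglue.covers c1 c2 (φ1 u1) = j1 := (hΦ1 _ _ _).trans hu1'
        subst h2
        subst h1
        refine congrArg (Sigma.mk _) (congrArg (Sigma.mk _) ?_)
        refine Prod.ext ?_ ?_
        · exact Subtype.ext (hFΦ c1 c2)
        · exact Subtype.ext (hGΦ c1 c2
            (hu2'.trans (congrArg f hu1'.symm)) (hv2'.trans (congrArg f hv1'.symm)))
    }
  -- membership rewriting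
  have hmem1 : ∀ (j1 j2 : Fin m) (c1 : V1 → Fin m),
      (∀ p ∈ ({(u1, j1), (v1, j2)} : Set (V1 × Fin m)), c1 p.1 = p.2) ↔
        (c1 u1 = j1 ∧ c1 v1 = j2) := by
    intro j1 j2 c1
    constructor
    · intro h
      exact ⟨h _ (Set.mem_insert _ _), h _ (Set.mem_insert_of_mem _ rfl)⟩
    · rintro ⟨h1, h2⟩ p hp
      simp only [Set.mem_insert_iff, Set.mem_singleton_iff] at hp
      rcases hp with rfl | rfl
      · exact h1
      · exact h2
  have hmem2 : ∀ (j1 j2 : Fin m) (c2 : V2 → Fin m),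
      (∀ p ∈ ({(u2, f j1), (v2, f j2)} : Set (V2 × Fin m)), c2 p.1 = p.2) ↔
        (c2 u2 = f j1 ∧ c2 v2 = f j2) := by
    intro j1 j2 c2
    constructor
    · intro h
      exact ⟨h _ (Set.mem_insert _ _), h _ (Set.mem_insert_of_mem _ rfl)⟩
    · rintro ⟨h1, h2⟩ p hp
      simp only [Set.mem_insert_iff, Set.mem_singleton_iff] at hp
      rcases hp with rfl | rfl
      · exact h1
      · exact h2
  -- counting
  rw [dpCount, Nat.card_congr e, nat_card_sigma]
  refine Finset.sum_congr rfl fun j2 _ => ?_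
  rw [nat_card_sigma]
  refine Finset.sum_congr rfl fun j1 _ => ?_
  rw [Nat.card_prod]
  simp only [NCount]
  congr 1
  · exact Nat.card_congr (Equiv.subtypeEquivRight fun c1 =>
      and_congr_right fun _ => (hmem1 j1 j2 c1).symm)
  · exact Nat.card_congr (Equiv.subtypeEquivRight fun c2 =>
      and_congr_right fun _ => (hmem2 j1 j2 c2).symm)
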